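/- Let $r : \mathbb{Z} \to \mathbb{R}$ be even with $|r(m)| \le C(1+|m|)^{2H-2}$ for $C>0$, $H \in (0,3/4)$. Then the limit $\Sigma_{12} := \lim_{n\to\infty} \frac{2}{n} \sum_{k,k'=1}^{n} r(k'-k)\,r(k'+1-k)$ exists and equals $4 \sum_{m=0}^{\infty} r(m)\,r(m+1)$, and the series on the right converges absolutely. -/

import Mathlib

open Filter Finset

lemma sum_shift_nat (g : ℤ → ℝ) (a b : ℕ) (c : ℤ) :
    ∑ k ∈ Icc a b, g (c - (k : ℤ)) = ∑ m ∈ Icc (c - (b : ℤ)) (c - (a : ℤ)), g m := by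
  refine Finset.sum_nbij' (fun k => c - (k : ℤ)) (fun m => (c - m).toNat) ?_ ?_ ?_ ?_ ?_
  all_goals (intro x hx; simp [Finset.mem_Icc] at hx ⊢; try omega)

lemma sum_shift_nat' (g : ℤ → ℝ) (a b : ℕ) (c : ℤ) :
    ∑ k ∈ Icc a b, g ((k : ℤ) + c) = ∑ m ∈ Icc ((a : ℤ) + c) ((b : ℤ) + c), g m := by
  refine Finset.sum_nbij' (fun k => (k : ℤ) + c) (fun m => (m - c).toNat) ?_ ?_ ?_ ?_ ?_
  all_goals (intro x hx; simp [Finset.mem_Icc] at hx ⊢; try omega)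

lemma key_identity (g : ℤ → ℝ) (n : ℕ) :
    ∑ k ∈ Icc 1 n, ∑ k' ∈ Icc 1 n, g ((k' : ℤ) - k)
      = ∑ m ∈ Icc (-(n : ℤ)) n, ((n : ℝ) - |(m : ℝ)|) * g m := by
  induction n with
  | zero => simp
  | succ n ih =>
    have hins : Icc 1 (n + 1) = insert (n + 1) (Icc 1 n) := by
      ext x; simp [Finset.mem_Icc]; try omega
    have hnotmem : (n + 1) ∉ Icc 1 n := by simp
    have hLHS : ∑ k ∈ Icc 1 (n + 1), ∑ k' ∈ Icc 1 (n + 1), g ((k' : ℤ) - k)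
        = (∑ k ∈ Icc 1 (n + 1), g ((((n + 1 : ℕ)) : ℤ) - k))
          + (∑ k' ∈ Icc 1 n, g ((k' : ℤ) - ((n + 1 : ℕ) : ℤ)))
          + ∑ k ∈ Icc 1 n, ∑ k' ∈ Icc 1 n, g ((k' : ℤ) - k) := by
      rw [hins]
      simp only [Finset.sum_insert hnotmem]
      rw [Finset.sum_add_distrib]
      ring
    have hA : ∑ k ∈ Icc 1 (n + 1), g ((((n + 1 : ℕ)) : ℤ) - k)
        = ∑ m ∈ Icc (0 : ℤ) n, g m := by
      rw [sum_shift_nat g 1 (n + 1) (((n + 1 : ℕ)) : ℤ)]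
      norm_num
    have hB : ∑ k' ∈ Icc 1 n, g ((k' : ℤ) - ((n + 1 : ℕ) : ℤ))
        = ∑ m ∈ Icc (-(n : ℤ)) (-1), g m := by
      have h := sum_shift_nat' (g := g) (a := 1) (b := n) (c := -((n + 1 : ℕ) : ℤ))
      simp only [sub_eq_add_neg]
      rw [h]
      congr 1
      ext x; simp [Finset.mem_Icc]; try omega
    have hAB : ∑ m ∈ Icc (-(n : ℤ)) (-1), g m + ∑ m ∈ Icc (0 : ℤ) n, g m
        = ∑ m ∈ Icc (-(n : ℤ)) n, g m := by
      rw [← Finset.sum_union]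
      · congr 1; ext x; simp [Finset.mem_Icc]; try omega
      · rw [Finset.disjoint_left]; intro a ha hb; simp [Finset.mem_Icc] at ha hb; omega
    have hRHS : ∑ m ∈ Icc (-((n + 1 : ℕ) : ℤ)) ((n + 1 : ℕ) : ℤ),
          (((n + 1 : ℕ) : ℝ) - |(m : ℝ)|) * g m
        = ∑ m ∈ Icc (-(n : ℤ)) n, ((n : ℝ) - |(m : ℝ)|) * g m
          + ∑ m ∈ Icc (-(n : ℤ)) n, g m := by
      have hset : Icc (-((n + 1 : ℕ) : ℤ)) ((n + 1 : ℕ) : ℤ)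
          = insert (-((n + 1 : ℕ) : ℤ)) (insert (((n + 1 : ℕ)) : ℤ) (Icc (-(n : ℤ)) n)) := by
        ext x; simp [Finset.mem_Icc]; try push_cast; try omega
      rw [hset, Finset.sum_insert (by simp [Finset.mem_Icc]; try push_cast; try omega),
        Finset.sum_insert (by simp [Finset.mem_Icc]; try push_cast; try omega)]
      have h1 : (((n + 1 : ℕ) : ℝ) - |((-((n + 1 : ℕ) : ℤ) : ℤ) : ℝ)|) = 0 := by
        push_cast
        rw [abs_neg, abs_of_nonneg (by positivity)]; ring
      have h2 : (((n + 1 : ℕ) : ℝ) - |((((n + 1 : ℕ) : ℤ)) : ℝ)|) = 0 := by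
        push_cast
        rw [abs_of_nonneg (by positivity)]; ring
      rw [h1, h2, ← Finset.sum_add_distrib]
      have heq : ∀ m ∈ Icc (-(n : ℤ)) n, (((n + 1 : ℕ) : ℝ) - |(m : ℝ)|) * g m
          = ((n : ℝ) - |(m : ℝ)|) * g m + g m := by
        intro m _; push_cast; ring
      rw [Finset.sum_congr rfl heq]; ring
    rw [hLHS, hA, hB, ih, hRHS]
    linarith [hAB]

theorem sigma12_limit (r : ℤ → ℝ) (C H : ℝ) (hC : 0 < C)
    (hH0 : 0 < H) (hH : H < 3 / 4)
    (heven : ∀ m : ℤ, r (-m) = r m)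
    (hr : ∀ m : ℤ, |r m| ≤ C * (1 + |(m : ℝ)|) ^ (2 * H - 2)) :
    Summable (fun m : ℕ => |r m * r (m + 1)|) ∧
    Tendsto (fun n : ℕ => (2 / (n : ℝ)) * ∑ k ∈ Icc 1 n, ∑ k' ∈ Icc 1 n,
        r ((k' : ℤ) - k) * r ((k' : ℤ) + 1 - k))
      atTop (nhds (4 * ∑' m : ℕ, r m * r (m + 1))) := by
  set f : ℤ → ℝ := fun m => r m * r (m + 1) with hf
  have hexp : (4 * H - 4 : ℝ) < -1 := by linarith
  have hexp0 : (2 * H - 2 : ℝ) ≤ 0 := by linarith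
  -- summability over ℕ
  have hbound : ∀ m : ℕ, |f (m : ℤ)| ≤ C ^ 2 * ((m : ℝ) + 1) ^ (4 * H - 4 : ℝ) := by
    intro m
    have h1 : |r (m : ℤ)| ≤ C * ((m : ℝ) + 1) ^ (2 * H - 2 : ℝ) := by
      have := hr (m : ℤ)
      rwa [show |((m : ℤ) : ℝ)| = (m : ℝ) by
        rw [abs_of_nonneg (by positivity)]; push_cast; ring, add_comm] at this
    have h2 : |r ((m : ℤ) + 1)| ≤ C * ((m : ℝ) + 1) ^ (2 * H - 2 : ℝ) := by
      have h := hr ((m : ℤ) + 1)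
      have he : |(((m : ℤ) + 1 : ℤ) : ℝ)| = (m : ℝ) + 1 := by
        rw [abs_of_nonneg (by positivity)]; push_cast; ring
      rw [he] at h
      refine h.trans (mul_le_mul_of_nonneg_left ?_ hC.le)
      exact Real.rpow_le_rpow_of_nonpos (by positivity) (by linarith) hexp0
    calc |f (m : ℤ)| = |r (m : ℤ)| * |r ((m : ℤ) + 1)| := abs_mul _ _
      _ ≤ (C * ((m : ℝ) + 1) ^ (2 * H - 2 : ℝ)) * (C * ((m : ℝ) + 1) ^ (2 * H - 2 : ℝ)) := by
          apply mul_le_mul h1 h2 (abs_nonneg _) (by positivity)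
      _ = C ^ 2 * ((m : ℝ) + 1) ^ (4 * H - 4 : ℝ) := by
          rw [show (4 * H - 4 : ℝ) = (2 * H - 2) + (2 * H - 2) by ring,
            Real.rpow_add (by positivity : (0:ℝ) < (m : ℝ) + 1)]
          ring
  have hsummaj : Summable (fun m : ℕ => C ^ 2 * ((m : ℝ) + 1) ^ (4 * H - 4 : ℝ)) := by
    apply Summable.mul_left
    have h1 : Summable (fun n : ℕ => ((n : ℝ)) ^ (4 * H - 4 : ℝ)) :=
      Real.summable_nat_rpow.mpr hexp
    have h2 := h1.comp_injective Nat.succ_injective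
    refine h2.congr fun n => ?_
    simp [Function.comp, Nat.succ_eq_add_one]
  have habs : Summable (fun m : ℕ => |f (m : ℤ)|) :=
    Summable.of_nonneg_of_le (fun _ => abs_nonneg _) hbound hsummaj
  have hf1 : Summable (fun m : ℕ => f (m : ℤ)) := habs.of_abs
  have hneg : ∀ n : ℕ, f (-((n : ℤ) + 1)) = f (n : ℤ) := by
    intro n
    have e1 : r (-((n : ℤ) + 1)) = r ((n : ℤ) + 1) := heven _
    have e2 : r (-((n : ℤ) + 1) + 1) = r (n : ℤ) := by
      rw [show -((n : ℤ) + 1) + 1 = -(n : ℤ) by ring, heven]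
    simp only [hf, e1, e2]; ring
  have hf2 : Summable (fun n : ℕ => f (-((n : ℤ) + 1))) := hf1.congr fun n => (hneg n).symm
  have hsumZ : Summable f := Summable.of_nat_of_neg_add_one hf1 hf2
  have htsumZ : ∑' m : ℤ, f m = 2 * ∑' m : ℕ, f (m : ℤ) := by
    rw [tsum_of_nat_of_neg_add_one hf1 hf2, tsum_congr hneg]; ring
  constructor
  · exact habs.congr fun m => by push_cast; rfl
  -- the limit
  · set F : ℕ → ℤ → ℝ := fun n m =>
      if m ∈ Icc (-(n : ℤ)) (n : ℤ) then (2 - 2 * |(m : ℝ)| / n) * f m else 0 with hF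
    have hmain : Tendsto (fun n : ℕ => ∑' m : ℤ, F n m) atTop (nhds (∑' m : ℤ, 2 * f m)) := by
      refine tendsto_tsum_of_dominated_convergence (bound := fun m : ℤ => 2 * |f m|)
        (hsumZ.abs.mul_left 2) (fun m => ?_) ?_
      · -- pointwise limit
        have hlim : Tendsto (fun n : ℕ => (2 - 2 * |(m : ℝ)| / n) * f m) atTop (nhds (2 * f m)) := by
          have h0 : Tendsto (fun n : ℕ => (2 * |(m : ℝ)|) / n) atTop (nhds 0) :=
            tendsto_const_div_atTop_nhds_zero_nat _
          have := ((tendsto_const_nhds (x := (2:ℝ))).sub h0).mul_const (f m)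
          simpa [mul_div_assoc] using this
        refine hlim.congr' ?_
        filter_upwards [eventually_ge_atTop m.natAbs] with n hn
        rw [hF]; simp only
        rw [if_pos (by simp [Finset.mem_Icc]; omega)]
      · -- bound
        filter_upwards with n
        intro m
        rw [hF]; simp only
        by_cases hm : m ∈ Icc (-(n : ℤ)) (n : ℤ)
        · rw [if_pos hm]
          simp only [Finset.mem_Icc] at hm
          have hq : 0 ≤ 2 * |(m : ℝ)| / n ∧ 2 * |(m : ℝ)| / n ≤ 2 := by
            constructor
            · positivity
            · rcases Nat.eq_zero_or_pos n with h0 | h0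
              · have : m = 0 := by omega
                simp [this, h0]
              · have hmn : |(m : ℝ)| ≤ (n : ℝ) := by
                  rw [abs_le]; constructor <;> [exact_mod_cast hm.1; exact_mod_cast hm.2]
                have hn0 : (0 : ℝ) < n := by exact_mod_cast h0
                rw [div_le_iff₀ hn0]; nlinarith [abs_nonneg ((m : ℝ))]
          rw [Real.norm_eq_abs, abs_mul]
          have : |2 - 2 * |(m : ℝ)| / n| ≤ 2 := by
            rw [abs_le]
            exact ⟨by linarith [hq.1, hq.2], by linarith [hq.1, hq.2]⟩
          exact mul_le_mul_of_nonneg_right this (abs_nonneg _) |>.trans_eq rfl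
        · rw [if_neg hm]; simp; try positivity
    have hcongr : (fun n : ℕ => (2 / (n : ℝ)) * ∑ k ∈ Icc 1 n, ∑ k' ∈ Icc 1 n,
        r ((k' : ℤ) - k) * r ((k' : ℤ) + 1 - k)) =ᶠ[atTop] fun n : ℕ => ∑' m : ℤ, F n m := by
      filter_upwards [eventually_ge_atTop 1] with n hn
      have hn0 : (0 : ℝ) < n := by exact_mod_cast hn
      have hdc : ∑ k ∈ Icc 1 n, ∑ k' ∈ Icc 1 n, r ((k' : ℤ) - k) * r ((k' : ℤ) + 1 - k)
          = ∑ k ∈ Icc 1 n, ∑ k' ∈ Icc 1 n, f ((k' : ℤ) - k) := by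
        refine Finset.sum_congr rfl fun k _ => Finset.sum_congr rfl fun k' _ => ?_
        simp only [hf]
        congr 1
        ring
      rw [hdc, key_identity f n]
      rw [tsum_eq_sum (s := Icc (-(n : ℤ)) (n : ℤ)) (by intro m hm; rw [hF]; simp only; rw [if_neg hm])]
      rw [Finset.mul_sum]
      refine Finset.sum_congr rfl fun m hm => ?_
      rw [hF]; simp only; rw [if_pos hm]
      field_simp
      try ring
    have hval : ∑' m : ℤ, 2 * f m = 4 * ∑' m : ℕ, r m * r (m + 1) := by
      rw [tsum_mul_left, htsumZ]
      have : ∑' m : ℕ, f (m : ℤ) = ∑' m : ℕ, r m * r (m + 1) := by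
        refine tsum_congr fun m => ?_
        simp only [hf]; try push_cast; try rfl
      rw [this]; ring
    rw [← hval]
    exact Tendsto.congr' hcongr.symm hmain
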